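/- Let M ≥ 1 be an integer, let A ∈ ℂ satisfy e^{2πA/M} ≠ 1, and set θ_k := 2πk/M for k = 0,…,M−1. Then for every m ∈ {0,…,M−1}: Σ_{k=0}^{M−1} e^{A(θ_k − θ_m)} · c_{mk} = sinh(πA) · (1 + e^{2πA/M})/(e^{2πA/M} − 1), where c_{mk} := e^{−πA} if k > m, c_{mm} := cosh(πA), and c_{mk} := e^{πA} if k < m. In particular this sum is independent of m, and for the symmetric Alexander angles the matrix sum Σ_k 𝒜_{mk} equals sinh(πA)·coth(πA/M). -/

import Mathlib

lemma alexander_aux1 (E F q Q : ℂ) (hEF : E * F = 1) (hq1 : q - 1 ≠ 0) (hQ : Q ≠ 0) :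
    Q⁻¹ * (E * ((Q - 1) / (q - 1)) + Q * ((E + F) / 2) +
      F * ((E ^ 2 - 1) / (q - 1) - (q * Q - 1) / (q - 1))) =
    (E - F) / 2 * (1 + q) / (q - 1) := by
  field_simp
  ring_nf
  linear_combination (2*E) * hEF

lemma alexander_aux1' (E F q : ℂ) (hEF : E * F = 1) (hq1 : q - 1 ≠ 0) (hq0 : q ≠ 0)
    (n : ℕ) :
    (q ^ n)⁻¹ * (E * ((q ^ n - 1) / (q - 1)) + q ^ n * ((E + F) / 2) +
      F * ((E ^ 2 - 1) / (q - 1) - (q ^ (n + 1) - 1) / (q - 1))) =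
    (E - F) / 2 * (1 + q) / (q - 1) := by
  have h : q ^ (n + 1) = q * q ^ n := pow_succ' q n
  rw [h]
  exact alexander_aux1 E F q (q ^ n) hEF hq1 (pow_ne_zero _ hq0)

lemma alexander_aux2 (s u F : ℂ) (huF : u * F = 1) (hu1 : u ^ 2 - 1 ≠ 0)
    (huF2 : u - F ≠ 0) :
    s * (1 + u ^ 2) / (u ^ 2 - 1) = s * ((u + F) / 2 / ((u - F) / 2)) := by
  field_simp
  ring_nf
  linear_combination (-2*s*u) * huF

/-- Let `M ≥ 1`, let `A ∈ ℂ` with `e^{2πA/M} ≠ 1`, and set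
`θ_k := 2πk/M`.  Then for every `m`,
`Σ_k e^{A(θ_k−θ_m)} c_{mk} = sinh(πA)(1+e^{2πA/M})/(e^{2πA/M}−1) = sinh(πA)·coth(πA/M)`,
where `c_{mk} := e^{−πA}` if `k > m`, `c_{mm} := cosh(πA)`, `c_{mk} := e^{πA}` if `k < m`;
in particular the sum is independent of `m`. -/
theorem alexander_sum (M : ℕ) (hM : 1 ≤ M) (A : ℂ)
    (hA : Complex.exp (2 * (Real.pi : ℂ) * A / (M : ℂ)) ≠ 1) (m : Fin M) :
    (∑ k : Fin M,
        Complex.exp (A * (((2 * Real.pi * (k : ℕ) / M : ℝ) : ℂ) -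
            ((2 * Real.pi * (m : ℕ) / M : ℝ) : ℂ))) *
          (if m < k then Complex.exp (-(Real.pi : ℂ) * A)
           else if k = m then Complex.cosh ((Real.pi : ℂ) * A)
           else Complex.exp ((Real.pi : ℂ) * A))) =
      Complex.sinh ((Real.pi : ℂ) * A) *
        (1 + Complex.exp (2 * (Real.pi : ℂ) * A / (M : ℂ))) /
        (Complex.exp (2 * (Real.pi : ℂ) * A / (M : ℂ)) - 1) ∧
    (∑ k : Fin M,
        Complex.exp (A * (((2 * Real.pi * (k : ℕ) / M : ℝ) : ℂ) -
            ((2 * Real.pi * (m : ℕ) / M : ℝ) : ℂ))) *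
          (if m < k then Complex.exp (-(Real.pi : ℂ) * A)
           else if k = m then Complex.cosh ((Real.pi : ℂ) * A)
           else Complex.exp ((Real.pi : ℂ) * A))) =
      Complex.sinh ((Real.pi : ℂ) * A) *
        (Complex.cosh ((Real.pi : ℂ) * A / (M : ℂ)) /
          Complex.sinh ((Real.pi : ℂ) * A / (M : ℂ))) := by
  have hM0 : (M : ℂ) ≠ 0 := Nat.cast_ne_zero.mpr (by omega)
  set q : ℂ := Complex.exp (2 * (Real.pi : ℂ) * A / (M : ℂ)) with hq
  set E : ℂ := Complex.exp ((Real.pi : ℂ) * A) with hE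
  set u : ℂ := Complex.exp ((Real.pi : ℂ) * A / (M : ℂ)) with hu
  have hq0 : q ≠ 0 := Complex.exp_ne_zero _
  have hE0 : E ≠ 0 := Complex.exp_ne_zero _
  have hu0 : u ≠ 0 := Complex.exp_ne_zero _
  have hq1 : q - 1 ≠ 0 := sub_ne_zero.mpr hA
  have hqM : q ^ M = E ^ 2 := by
    rw [hq, hE, ← Complex.exp_nat_mul, ← Complex.exp_nat_mul]
    congr 1
    field_simp
    ring
  have hqu : q = u ^ 2 := by
    rw [hq, hu, ← Complex.exp_nat_mul]
    congr 1
    push_cast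
    ring
  have hEneg : Complex.exp (-(Real.pi : ℂ) * A) = E⁻¹ := by
    rw [hE, ← Complex.exp_neg]; ring_nf
  have hcosh : Complex.cosh ((Real.pi : ℂ) * A) = (E + E⁻¹) / 2 := by
    rw [Complex.cosh, hE, Complex.exp_neg]
  have hsinh : Complex.sinh ((Real.pi : ℂ) * A) = (E - E⁻¹) / 2 := by
    rw [Complex.sinh, hE, Complex.exp_neg]
  have hcoshu : Complex.cosh ((Real.pi : ℂ) * A / (M : ℂ)) = (u + u⁻¹) / 2 := by
    rw [Complex.cosh, hu, Complex.exp_neg]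
  have hsinhu : Complex.sinh ((Real.pi : ℂ) * A / (M : ℂ)) = (u - u⁻¹) / 2 := by
    rw [Complex.sinh, hu, Complex.exp_neg]
  set f : ℕ → ℂ := fun k => q ^ k *
      (if (m : ℕ) < k then E⁻¹ else if k = (m : ℕ) then (E + E⁻¹) / 2 else E) with hf
  have key : ∀ k : Fin M,
      Complex.exp (A * (((2 * Real.pi * (k : ℕ) / M : ℝ) : ℂ) -
            ((2 * Real.pi * (m : ℕ) / M : ℝ) : ℂ))) *
          (if m < k then Complex.exp (-(Real.pi : ℂ) * A)
           else if k = m then Complex.cosh ((Real.pi : ℂ) * A)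
           else Complex.exp ((Real.pi : ℂ) * A)) = (q ^ (m : ℕ))⁻¹ * f (k : ℕ) := by
    intro k
    have h1 : A * (((2 * Real.pi * (k : ℕ) / M : ℝ) : ℂ) -
        ((2 * Real.pi * (m : ℕ) / M : ℝ) : ℂ)) =
        (k : ℕ) * (2 * (Real.pi : ℂ) * A / (M : ℂ)) -
        (m : ℕ) * (2 * (Real.pi : ℂ) * A / (M : ℂ)) := by
      push_cast
      ring
    rw [h1, Complex.exp_sub, Complex.exp_nat_mul, Complex.exp_nat_mul, ← hq,
      hEneg, hcosh, hf]
    simp only [Fin.lt_def, Fin.ext_iff]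
    ring
  have hsum : ∑ k : Fin M, f (k : ℕ) = ∑ k ∈ Finset.range M, f k :=
    Fin.sum_univ_eq_sum_range f M
  have hm1 : (m : ℕ) + 1 ≤ M := m.isLt
  have hsplit : ∑ k ∈ Finset.range M, f k =
      (∑ k ∈ Finset.range (m : ℕ), f k) + f (m : ℕ) +
      ((∑ k ∈ Finset.range M, f k) - ∑ k ∈ Finset.range ((m : ℕ) + 1), f k) := by
    rw [Finset.sum_range_succ]
    ring
  have hlow : ∑ k ∈ Finset.range (m : ℕ), f k =
      E * ((q ^ (m : ℕ) - 1) / (q - 1)) := by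
    have e : ∑ k ∈ Finset.range (m : ℕ), f k =
        ∑ k ∈ Finset.range (m : ℕ), q ^ k * E :=
      Finset.sum_congr rfl fun k hk => by
        have hk' := Finset.mem_range.mp hk
        simp only [hf]
        rw [if_neg (by omega), if_neg (by omega)]
    rw [e, ← Finset.sum_mul, geom_sum_eq hA]
    ring
  have hmid : f (m : ℕ) = q ^ (m : ℕ) * ((E + E⁻¹) / 2) := by
    simp [hf]
  have hhigh : (∑ k ∈ Finset.range M, f k) - (∑ k ∈ Finset.range ((m : ℕ) + 1), f k) =
      E⁻¹ * ((E ^ 2 - 1) / (q - 1) - (q ^ ((m : ℕ) + 1) - 1) / (q - 1)) := by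
    have e1 : ∑ k ∈ Finset.range M, f k =
        (∑ k ∈ Finset.range ((m:ℕ)+1), f k) + ∑ k ∈ Finset.Ico ((m:ℕ)+1) M, f k :=
      (Finset.sum_range_add_sum_Ico f hm1).symm
    have e2 : ∑ k ∈ Finset.Ico ((m:ℕ)+1) M, f k =
        ∑ k ∈ Finset.Ico ((m:ℕ)+1) M, q ^ k * E⁻¹ :=
      Finset.sum_congr rfl fun k hk => by
        have hk' := (Finset.mem_Ico.mp hk).1
        simp only [hf]
        rw [if_pos (by omega)]
    have e3 : ∑ k ∈ Finset.Ico ((m:ℕ)+1) M, q ^ k =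
        (q ^ M - 1) / (q - 1) - (q ^ ((m:ℕ)+1) - 1) / (q - 1) := by
      rw [Finset.sum_Ico_eq_sub _ hm1, geom_sum_eq hA, geom_sum_eq hA]
    rw [e1, e2, ← Finset.sum_mul, e3, hqM]
    ring
  have main : (∑ k : Fin M,
        Complex.exp (A * (((2 * Real.pi * (k : ℕ) / M : ℝ) : ℂ) -
            ((2 * Real.pi * (m : ℕ) / M : ℝ) : ℂ))) *
          (if m < k then Complex.exp (-(Real.pi : ℂ) * A)
           else if k = m then Complex.cosh ((Real.pi : ℂ) * A)
           else Complex.exp ((Real.pi : ℂ) * A))) =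
      (E - E⁻¹) / 2 * (1 + q) / (q - 1) := by
    rw [Finset.sum_congr rfl fun k _ => key k, ← Finset.mul_sum, hsum, hsplit,
      hlow, hmid, hhigh]
    exact alexander_aux1' E E⁻¹ q (mul_inv_cancel₀ hE0) hq1 hq0 (m : ℕ)
  have hu1 : u ^ 2 - 1 ≠ 0 := by rw [← hqu]; exact hq1
  have huinv : u - u⁻¹ ≠ 0 := by
    intro h
    apply hu1
    have h2 : u * (u - u⁻¹) = u ^ 2 - 1 := by
      field_simp
    rw [← h2, h, mul_zero]
  constructor
  · rw [main, hsinh]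
  · rw [main, hsinh, hcoshu, hsinhu, hqu]
    exact alexander_aux2 _ u u⁻¹ (mul_inv_cancel₀ hu0) hu1 huinv
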